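/- Let F = 𝔽₂, let a₁, a₂ be real numbers, and let ε₁ ≥ ε₂ > 0 be real numbers. Let C be the 4-dimensional F-vector space with basis e₁, e₂, e₃, e₄, assigned filtration levels ℓ(e₁) = a₁ + a₂ + ε₁ + ε₂, ℓ(e₂) = a₁ + a₂ + ε₁, ℓ(e₃) = a₁ + a₂ + ε₂, ℓ(e₄) = a₁ + a₂, and for each s ∈ ℝ define the increasing filtration F_s to be the F-span of {e_i : ℓ(e_i) ≤ s}. Let ∂ : C → C be the F-linear map with ∂e₁ = e₂ + e₃, ∂e₂ = e₄, ∂e₃ = e₄, ∂e₄ = 0 (so ∂ ∘ ∂ = 0 and ∂(F_s) ⊆ F_s for all s). Then there exists a basis f₁, f₂, f₃, f₄ of C such that: (i) for every s ∈ ℝ, F_s equals the F-span of {f_i : ℓ(e_i) ≤ s} (i.e. the change of basis is filtered, with f_i having filtration level ℓ(e_i)); (ii) ∂f₁ = f₂ and ∂f₃ = f₄; and (iii) the filtration-level gaps satisfy ℓ(e₁) − ℓ(e₂) = ε₂ and ℓ(e₃) − ℓ(e₄) = ε₂. Consequently C splits as a direct sum of the two filtered two-term subcomplexes span{f₁, f₂}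 and span{f₃, f₄}, each of the form X → Y with filtration gap ε₂ = min(ε₁, ε₂). -/

import Mathlib

/-- **Tensor product of two filtered two-term complexes over `𝔽₂`.**

Let `V` be a four-dimensional `𝔽₂`-vector space with basis `e 0, e 1, e 2, e 3` at
filtration levels `a₁ + a₂ + ε₁ + ε₂`, `a₁ + a₂ + ε₁`, `a₁ + a₂ + ε₂`, `a₁ + a₂`
respectively (where `ε₁ ≥ ε₂ > 0`), with increasing filtration `Filt s` spanned by the
basis vectors of filtration level `≤ s`, and let `d` be the `𝔽₂`-linear map with
`d (e 0) = e 1 + e 2`, `d (e 1) = e 3`, `d (e 2) = e 3`, `d (e 3) = 0`.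
Then there is a filtered change of basis `f` (with `f i` at filtration level `ℓ i`)
such that `d (f 0) = f 1`, `d (f 2) = f 3`, the filtration gaps are
`ℓ 0 - ℓ 1 = ε₂` and `ℓ 2 - ℓ 3 = ε₂ = min ε₁ ε₂`, and `V` splits as the direct sum of
the two `d`-invariant filtered two-term subcomplexes `span {f 0, f 1}` and
`span {f 2, f 3}`. -/
theorem tensor_of_two_step_complexes
    {V : Type*} [AddCommGroup V] [Module (ZMod 2) V]
    (a₁ a₂ ε₁ ε₂ : ℝ) (hε₂ : 0 < ε₂) (hε : ε₂ ≤ ε₁)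
    (e : Module.Basis (Fin 4) (ZMod 2) V)
    (ℓ : Fin 4 → ℝ)
    (hℓ : ℓ = ![a₁ + a₂ + ε₁ + ε₂, a₁ + a₂ + ε₁, a₁ + a₂ + ε₂, a₁ + a₂])
    (Filt : ℝ → Submodule (ZMod 2) V)
    (hFilt : ∀ s : ℝ, Filt s = Submodule.span (ZMod 2) (⇑e '' {i : Fin 4 | ℓ i ≤ s}))
    (d : V →ₗ[ZMod 2] V)
    (hd0 : d (e 0) = e 1 + e 2) (hd1 : d (e 1) = e 3)
    (hd2 : d (e 2) = e 3) (hd3 : d (e 3) = 0) :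
    ∃ f : Module.Basis (Fin 4) (ZMod 2) V,
      -- (i) the change of basis is filtered, `f i` having filtration level `ℓ i`
      (∀ s : ℝ, Filt s = Submodule.span (ZMod 2) (⇑f '' {i : Fin 4 | ℓ i ≤ s})) ∧
      -- (ii) the differential pairs up the new basis
      d (f 0) = f 1 ∧ d (f 2) = f 3 ∧
      -- (iii) the filtration-level gaps both equal `ε₂ = min ε₁ ε₂`
      ℓ 0 - ℓ 1 = ε₂ ∧ ℓ 2 - ℓ 3 = ε₂ ∧ ε₂ = min ε₁ ε₂ ∧
      -- consequently, `V` splits as a direct sum of two `d`-invariant two-term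
      -- filtered subcomplexes
      IsCompl (Submodule.span (ZMod 2) {f 0, f 1})
        (Submodule.span (ZMod 2) {f 2, f 3}) ∧
      (∀ c ∈ Submodule.span (ZMod 2) ({f 0, f 1} : Set V),
        d c ∈ Submodule.span (ZMod 2) ({f 0, f 1} : Set V)) ∧
      (∀ c ∈ Submodule.span (ZMod 2) ({f 2, f 3} : Set V),
        d c ∈ Submodule.span (ZMod 2) ({f 2, f 3} : Set V)) := by
  have hvv : ∀ v : V, v + v = 0 := by
    intro v
    have h := two_smul (ZMod 2) v
    have h2 : (2 : ZMod 2) = 0 := rfl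
    rw [h2, zero_smul] at h
    exact h.symm
  -- the involutive change-of-basis map
  set T : V →ₗ[ZMod 2] V := e.constr (ZMod 2) ![e 0, e 1 + e 2, e 2, e 3] with hT
  have hT0 : T (e 0) = e 0 := by simp [hT, Module.Basis.constr_basis]
  have hT1 : T (e 1) = e 1 + e 2 := by simp [hT, Module.Basis.constr_basis]
  have hT2 : T (e 2) = e 2 := by simp [hT, Module.Basis.constr_basis]
  have hT3 : T (e 3) = e 3 := by simp [hT, Module.Basis.constr_basis]
  have hTT : T.comp T = LinearMap.id := by
    apply e.ext
    intro i
    fin_cases i <;>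
      simp [hT0, hT1, hT2, hT3, map_add, add_assoc, hvv]
  set Te : V ≃ₗ[ZMod 2] V := LinearEquiv.ofLinear T T hTT hTT with hTe
  set f : Module.Basis (Fin 4) (ZMod 2) V := e.map Te with hf
  have hf0 : f 0 = e 0 := by simp [hf, hTe, Module.Basis.map_apply, hT0]
  have hf1 : f 1 = e 1 + e 2 := by simp [hf, hTe, Module.Basis.map_apply, hT1]
  have hf2 : f 2 = e 2 := by simp [hf, hTe, Module.Basis.map_apply, hT2]
  have hf3 : f 3 = e 3 := by simp [hf, hTe, Module.Basis.map_apply, hT3]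
  have hℓ0 : ℓ 0 = a₁ + a₂ + ε₁ + ε₂ := by simp [hℓ]
  have hℓ1 : ℓ 1 = a₁ + a₂ + ε₁ := by simp [hℓ]
  have hℓ2 : ℓ 2 = a₁ + a₂ + ε₂ := by simp [hℓ]
  have hℓ3 : ℓ 3 = a₁ + a₂ := by simp [hℓ]
  have hℓ21 : ℓ 2 ≤ ℓ 1 := by rw [hℓ1, hℓ2]; linarith
  have hdf1 : d (f 1) = 0 := by rw [hf1, map_add, hd1, hd2, hvv]
  have hdf3 : d (f 3) = 0 := by rw [hf3, hd3]
  refine ⟨f, ?_, ?_, ?_, ?_, ?_, ?_, ?_, ?_, ?_⟩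
  · -- filtration
    intro s
    rw [hFilt]
    apply le_antisymm
    · rw [Submodule.span_le]
      rintro _ ⟨i, hi, rfl⟩
      simp only [Set.mem_setOf_eq] at hi
      fin_cases i
      · exact Submodule.subset_span ⟨0, hi, hf0⟩
      · -- e 1 = f 1 + f 2
        have h1 : ℓ 1 ≤ s := hi
        have h2 : ℓ 2 ≤ s := le_trans hℓ21 h1
        show e 1 ∈ Submodule.span (ZMod 2) (⇑f '' {i | ℓ i ≤ s})
        have he1 : e 1 = f 1 + f 2 := by
          rw [hf1, hf2, add_assoc, hvv, add_zero]
        rw [he1]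
        exact Submodule.add_mem _ (Submodule.subset_span ⟨1, h1, rfl⟩)
          (Submodule.subset_span ⟨2, h2, rfl⟩)
      · exact Submodule.subset_span ⟨2, hi, hf2⟩
      · exact Submodule.subset_span ⟨3, hi, hf3⟩
    · rw [Submodule.span_le]
      rintro _ ⟨i, hi, rfl⟩
      simp only [Set.mem_setOf_eq] at hi
      fin_cases i
      · exact Submodule.subset_span ⟨0, hi, hf0.symm⟩
      · have h1 : ℓ 1 ≤ s := hi
        have h2 : ℓ 2 ≤ s := le_trans hℓ21 h1
        show f 1 ∈ Submodule.span (ZMod 2) (⇑e '' {i | ℓ i ≤ s})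
        rw [hf1]
        exact Submodule.add_mem _ (Submodule.subset_span ⟨1, h1, rfl⟩)
          (Submodule.subset_span ⟨2, h2, rfl⟩)
      · exact Submodule.subset_span ⟨2, hi, hf2.symm⟩
      · exact Submodule.subset_span ⟨3, hi, hf3.symm⟩
  · rw [hf0, hd0, hf1]
  · rw [hf2, hd2, hf3]
  · rw [hℓ0, hℓ1]; ring
  · rw [hℓ2, hℓ3]; ring
  · exact (min_eq_right hε).symm
  · -- IsCompl
    have him01 : ({f 0, f 1} : Set V) = ⇑f '' {0, 1} := by
      rw [Set.image_insert_eq, Set.image_singleton]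
    have him23 : ({f 2, f 3} : Set V) = ⇑f '' {2, 3} := by
      rw [Set.image_insert_eq, Set.image_singleton]
    constructor
    · rw [him01, him23]
      refine f.linearIndependent.disjoint_span_image ?_
      rw [Set.disjoint_iff]
      rintro i ⟨h1, h2⟩
      simp only [Set.mem_insert_iff, Set.mem_singleton_iff] at h1 h2
      rcases h1 with rfl | rfl <;> rcases h2 with h | h <;> exact absurd h (by decide)
    · rw [codisjoint_iff, ← Submodule.span_union, eq_top_iff, ← f.span_eq,
        Submodule.span_le]
      rintro _ ⟨i, rfl⟩
      apply Submodule.subset_span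
      fin_cases i <;> simp
  · -- d-invariance of span {f 0, f 1}
    have hle : Submodule.span (ZMod 2) ({f 0, f 1} : Set V) ≤
        Submodule.comap d (Submodule.span (ZMod 2) ({f 0, f 1} : Set V)) := by
      rw [Submodule.span_le]
      rintro x (rfl | h)
      · refine Submodule.mem_comap.2 ?_
        rw [hf0, hd0, ← hf1]
        exact Submodule.subset_span (Set.mem_insert_of_mem _ rfl)
      · rw [Set.mem_singleton_iff] at h
        subst h
        refine Submodule.mem_comap.2 ?_
        rw [hdf1]
        exact Submodule.zero_mem _
    exact fun c hc => hle hc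
  · have hle : Submodule.span (ZMod 2) ({f 2, f 3} : Set V) ≤
        Submodule.comap d (Submodule.span (ZMod 2) ({f 2, f 3} : Set V)) := by
      rw [Submodule.span_le]
      rintro x (rfl | h)
      · refine Submodule.mem_comap.2 ?_
        rw [hf2, hd2, ← hf3]
        exact Submodule.subset_span (Set.mem_insert_of_mem _ rfl)
      · rw [Set.mem_singleton_iff] at h
        subst h
        refine Submodule.mem_comap.2 ?_
        rw [hdf3]
        exact Submodule.zero_mem _
    exact fun c hc => hle hc
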